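/- Let Θ₁, Θ₂ be Young functions with Θ₁ ≺ Θ₂ and Θ₁⁻¹ ≲ Θ₂⁻¹, and θ₁ ∈ G_{θ₁}, θ₂ ∈ G_{θ₂} with θ₂ ≲ θ₁. Then the strong-to-weak diagonal inclusion holds: M_{θ₂,Θ₂}(ℝⁿ) ⊆ wM_{θ₁,Θ₁}(ℝⁿ), with ‖f‖_{wM_{θ₁,Θ₁}} ≤ C‖f‖_{M_{θ₂,Θ₂}} for some C > 0 and all f ∈ M_{θ₂,Θ₂}(ℝⁿ). -/

import Mathlib

open MeasureTheory Metric Set ENNReal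

noncomputable section

/-- A Young function: convex, continuous, vanishing at 0, nonnegative, tending to ∞. -/
def IsYoung (Θ : ℝ → ℝ) : Prop :=
  ConvexOn ℝ (Set.Ici 0) Θ ∧ ContinuousOn Θ (Set.Ici 0) ∧ Θ 0 = 0 ∧
  (∀ t, 0 ≤ t → 0 ≤ Θ t) ∧ Filter.Tendsto Θ Filter.atTop Filter.atTop

/-- Generalized inverse Θ⁻¹(s) = inf {r ≥ 0 : Θ r > s}. -/
def invY (Θ : ℝ → ℝ) (s : ℝ) : ℝ := sInf {r : ℝ | 0 ≤ r ∧ s < Θ r}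

abbrev En (n : ℕ) := EuclideanSpace ℝ (Fin n)

/-- Luxemburg norm on a set B. -/
def luxNorm {n : ℕ} (Θ : ℝ → ℝ) (B : Set (En n)) (f : En n → ℝ) : ℝ≥0∞ :=
  sInf {e : ℝ≥0∞ | ∃ b : ℝ, 0 < b ∧ e = ENNReal.ofReal b ∧
    ∫⁻ x in B, ENNReal.ofReal (Θ (|f x| / b)) ∂volume ≤ 1}

/-- Weak Luxemburg quasi-norm on a set B. -/
def wLuxNorm {n : ℕ} (Θ : ℝ → ℝ) (B : Set (En n)) (f : En n → ℝ) : ℝ≥0∞ :=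
  sInf {e : ℝ≥0∞ | ∃ b : ℝ, 0 < b ∧ e = ENNReal.ofReal b ∧
    ∀ t : ℝ, 0 < t → ENNReal.ofReal (Θ t) * volume {x ∈ B | t < |f x| / b} ≤ 1}

/-- Orlicz–Morrey norm (Deringoz–Guliyev–Samko). -/
def morreyNorm (n : ℕ) (θ Θ : ℝ → ℝ) (f : En n → ℝ) : ℝ≥0∞ :=
  ⨆ (a : En n) (r : ℝ) (_ : 0 < r),
    ENNReal.ofReal ((1 / θ ((volume (ball a r)).toReal ^ ((1:ℝ)/n))) *
      invY Θ (1 / (volume (ball a r)).toReal)) * luxNorm Θ (ball a r) f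

/-- Weak Orlicz–Morrey quasi-norm. -/
def wMorreyNorm (n : ℕ) (θ Θ : ℝ → ℝ) (f : En n → ℝ) : ℝ≥0∞ :=
  ⨆ (a : En n) (r : ℝ) (_ : 0 < r),
    ENNReal.ofReal ((1 / θ ((volume (ball a r)).toReal ^ ((1:ℝ)/n))) *
      invY Θ (1 / (volume (ball a r)).toReal)) * wLuxNorm Θ (ball a r) f

/-- The class G_θ : θ positive and decreasing, with t ↦ Θ⁻¹(t^{-n})/θ(t) almost decreasing. -/
def Gclass (n : ℕ) (Θ θ : ℝ → ℝ) : Prop :=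
  (∀ t : ℝ, 0 < t → 0 < θ t) ∧
  (∀ s t : ℝ, 0 < s → s ≤ t → θ t ≤ θ s) ∧
  ∃ C : ℝ, 0 < C ∧ ∀ s t : ℝ, 0 < s → s ≤ t →
    invY Θ (t ^ (-(n:ℝ))) / θ t ≤ C * (invY Θ (s ^ (-(n:ℝ))) / θ s)

/-- Θ₁ ≺ Θ₂. -/
def prec (Θ₁ Θ₂ : ℝ → ℝ) : Prop := ∃ C : ℝ, 0 < C ∧ ∀ t : ℝ, 0 < t → Θ₁ t ≤ Θ₂ (C * t)

/-- Θ₁⁻¹ ≲ Θ₂⁻¹. -/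
def invLesssim (Θ₁ Θ₂ : ℝ → ℝ) : Prop :=
  ∃ C : ℝ, 0 < C ∧ ∀ t : ℝ, 0 < t → invY Θ₁ t ≤ C * invY Θ₂ t

lemma young_mono {Θ : ℝ → ℝ} (hΘ : IsYoung Θ) {s t : ℝ} (hs : 0 ≤ s) (hst : s ≤ t) :
    Θ s ≤ Θ t := by
  obtain ⟨hconv, _, h0, hpos, _⟩ := hΘ
  rcases eq_or_lt_of_le (hs.trans hst) with ht | ht
  · have : s = t := le_antisymm hst (ht ▸ hs)
    rw [this]
  · have hlam : s / t ∈ Set.Icc (0:ℝ) 1 := ⟨div_nonneg hs ht.le, div_le_one_of_le₀ hst ht.le⟩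
    have key := hconv.2 (Set.mem_Ici.mpr le_rfl : (0:ℝ) ∈ Set.Ici 0) (le_of_lt ht : t ∈ Set.Ici 0)
      (by linarith [hlam.2] : 0 ≤ 1 - s / t) hlam.1 (by ring)
    have harg : (1 - s / t) • (0:ℝ) + (s / t) • t = s := by
      rw [smul_eq_mul, smul_eq_mul, mul_zero, zero_add]; exact div_mul_cancel₀ s ht.ne'
    rw [harg] at key
    calc Θ s ≤ (1 - s/t) • Θ 0 + (s/t) • Θ t := key
      _ = (s/t) * Θ t := by simp [h0, smul_eq_mul]
      _ ≤ 1 * Θ t := by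
          apply mul_le_mul_of_nonneg_right hlam.2 (hpos t (le_of_lt ht))
      _ = Θ t := one_mul _

lemma invY_nonneg (Θ : ℝ → ℝ) (s : ℝ) : 0 ≤ invY Θ s :=
  Real.sInf_nonneg (fun _ hr => hr.1)

lemma young_comp_meas {n : ℕ} {Θ : ℝ → ℝ} (hΘ : IsYoung Θ) {f : En n → ℝ}
    (hf : Measurable f) {b : ℝ} (hb : 0 < b) :
    Measurable (fun x => ENNReal.ofReal (Θ (|f x| / b))) := by
  have hcont : Continuous (fun s : ℝ => Θ (max s 0)) :=
    hΘ.2.1.comp_continuous (continuous_id.max continuous_const)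
      (fun x => Set.mem_Ici.mpr (le_max_right _ _))
  have heq : (fun x => ENNReal.ofReal (Θ (|f x| / b))) =
      fun x => ENNReal.ofReal ((fun s : ℝ => Θ (max s 0)) (|f x| / b)) := by
    funext x
    simp [max_eq_left (div_nonneg (abs_nonneg _) hb.le)]
  rw [heq]
  exact ENNReal.measurable_ofReal.comp
    (hcont.measurable.comp ((hf.abs).div_const b))

lemma wLux_le_lux {n : ℕ} {Θ₁ Θ₂ : ℝ → ℝ} (hΘ₁ : IsYoung Θ₁) (hΘ₂ : IsYoung Θ₂)
    {Cp : ℝ} (hCp : 0 < Cp) (hp : ∀ t : ℝ, 0 < t → Θ₁ t ≤ Θ₂ (Cp * t))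
    {B : Set (En n)} (hB : MeasurableSet B) {f : En n → ℝ} (hf : Measurable f) :
    wLuxNorm Θ₁ B f ≤ ENNReal.ofReal Cp * luxNorm Θ₂ B f := by
  have hc0 : (ENNReal.ofReal Cp) ≠ 0 := by
    simp [ENNReal.ofReal_eq_zero, not_le, hCp]
  have hct : (ENNReal.ofReal Cp) ≠ ⊤ := ENNReal.ofReal_ne_top
  rw [mul_comm, ← ENNReal.div_le_iff hc0 hct]
  apply le_sInf
  rintro e ⟨b, hb, rfl, hint⟩
  rw [ENNReal.div_le_iff hc0 hct, ← ENNReal.ofReal_mul hb.le, mul_comm b Cp]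
  apply sInf_le
  refine ⟨Cp * b, mul_pos hCp hb, rfl, fun t ht => ?_⟩
  set A := {x ∈ B | t < |f x| / (Cp * b)} with hA
  have hAm : MeasurableSet A := by
    apply hB.inter
    exact measurableSet_lt measurable_const ((hf.abs).div_const _)
  calc ENNReal.ofReal (Θ₁ t) * volume A
      = ∫⁻ _ in A, ENNReal.ofReal (Θ₁ t) ∂volume := (setLIntegral_const A _).symm
    _ ≤ ∫⁻ x in A, ENNReal.ofReal (Θ₁ (|f x| / (Cp * b))) ∂volume := by
        apply setLIntegral_mono' hAm
        intro x hx
        exact ENNReal.ofReal_le_ofReal (young_mono hΘ₁ ht.le hx.2.le)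
    _ ≤ ∫⁻ x in B, ENNReal.ofReal (Θ₁ (|f x| / (Cp * b))) ∂volume :=
        lintegral_mono_set (fun x hx => hx.1)
    _ ≤ ∫⁻ x in B, ENNReal.ofReal (Θ₂ (|f x| / b)) ∂volume := by
        apply lintegral_mono
        intro x
        apply ENNReal.ofReal_le_ofReal
        rcases eq_or_lt_of_le (abs_nonneg (f x)) with h0 | h0
        · rw [← h0]
          simp [hΘ₁.2.2.1, hΘ₂.2.2.1]
        · have harg : 0 < |f x| / (Cp * b) := div_pos h0 (mul_pos hCp hb)
          have := hp _ harg
          have heq : Cp * (|f x| / (Cp * b)) = |f x| / b := by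
            field_simp
          rwa [heq] at this
    _ ≤ 1 := hint

theorem stmt15 (n : ℕ) (hn : 0 < n) (Θ₁ Θ₂ θ₁ θ₂ : ℝ → ℝ)
    (hΘ₁ : IsYoung Θ₁) (hΘ₂ : IsYoung Θ₂)
    (hp : prec Θ₁ Θ₂) (hi : invLesssim Θ₁ Θ₂)
    (hθ₁ : Gclass n Θ₁ θ₁) (hθ₂ : Gclass n Θ₂ θ₂)
    (C₀ : ℝ) (hC₀ : 0 < C₀) (hθ : ∀ t : ℝ, 0 < t → θ₂ t ≤ C₀ * θ₁ t) :
    ∃ C : ℝ, 0 < C ∧ ∀ f : En n → ℝ, Measurable f →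
      (wMorreyNorm n θ₁ Θ₁ f ≤ ENNReal.ofReal C * morreyNorm n θ₂ Θ₂ f) ∧
      (morreyNorm n θ₂ Θ₂ f ≠ ⊤ → wMorreyNorm n θ₁ Θ₁ f ≠ ⊤) := by
  obtain ⟨Cp, hCp, hpc⟩ := hp
  obtain ⟨Ci, hCi, hic⟩ := hi
  refine ⟨C₀ * Ci * Cp, by positivity, fun f hf => ?_⟩
  have hmain : wMorreyNorm n θ₁ Θ₁ f ≤
      ENNReal.ofReal (C₀ * Ci * Cp) * morreyNorm n θ₂ Θ₂ f := by
    rw [wMorreyNorm]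
    refine iSup_le fun a => iSup_le fun r => iSup_le fun hr => ?_
    set v := (volume (ball a r)).toReal with hv'
    have hv : 0 < v := ENNReal.toReal_pos (measure_ball_pos volume a hr).ne'
      measure_ball_lt_top.ne
    set u := v ^ ((1:ℝ)/n) with hu'
    have hu : 0 < u := Real.rpow_pos_of_pos hv _
    have hs : 0 < 1 / v := by positivity
    have hθ1u := hθ₁.1 u hu
    have hθ2u := hθ₂.1 u hu
    have hk : (1 / θ₁ u) * invY Θ₁ (1/v) ≤
        (C₀ * Ci) * ((1 / θ₂ u) * invY Θ₂ (1/v)) := by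
      have h1 : 1 / θ₁ u ≤ C₀ / θ₂ u := by
        rw [div_le_div_iff₀ hθ1u hθ2u]
        nlinarith [hθ u hu]
      have h2 : invY Θ₁ (1/v) ≤ Ci * invY Θ₂ (1/v) := hic _ hs
      calc (1/θ₁ u) * invY Θ₁ (1/v)
          ≤ (C₀/θ₂ u) * (Ci * invY Θ₂ (1/v)) :=
            mul_le_mul h1 h2 (invY_nonneg _ _) (by positivity)
        _ = (C₀*Ci) * ((1/θ₂ u) * invY Θ₂ (1/v)) := by ring
    have hw : wLuxNorm Θ₁ (ball a r) f ≤ ENNReal.ofReal Cp * luxNorm Θ₂ (ball a r) f :=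
      wLux_le_lux hΘ₁ hΘ₂ hCp hpc measurableSet_ball hf
    have e1 : ENNReal.ofReal ((C₀*Ci) * ((1/θ₂ u) * invY Θ₂ (1/v))) =
        ENNReal.ofReal (C₀*Ci) * ENNReal.ofReal ((1/θ₂ u) * invY Θ₂ (1/v)) :=
      ENNReal.ofReal_mul (by positivity)
    have e2 : ENNReal.ofReal (C₀*Ci*Cp) =
        ENNReal.ofReal (C₀*Ci) * ENNReal.ofReal Cp := ENNReal.ofReal_mul (by positivity)
    calc ENNReal.ofReal ((1/θ₁ u) * invY Θ₁ (1/v)) * wLuxNorm Θ₁ (ball a r) f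
        ≤ ENNReal.ofReal ((C₀*Ci) * ((1/θ₂ u) * invY Θ₂ (1/v))) *
            (ENNReal.ofReal Cp * luxNorm Θ₂ (ball a r) f) :=
          mul_le_mul' (ENNReal.ofReal_le_ofReal hk) hw
      _ = ENNReal.ofReal (C₀*Ci*Cp) *
            (ENNReal.ofReal ((1/θ₂ u) * invY Θ₂ (1/v)) * luxNorm Θ₂ (ball a r) f) := by
          rw [e1, e2]; ring
      _ ≤ ENNReal.ofReal (C₀*Ci*Cp) * morreyNorm n θ₂ Θ₂ f := by
          apply mul_le_mul_right
          rw [morreyNorm]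
          refine le_iSup_of_le a (le_iSup_of_le r (le_iSup_of_le hr ?_))
          rw [← hv', ← hu']
      _ = ENNReal.ofReal (C₀*Ci*Cp) * morreyNorm n θ₂ Θ₂ f := rfl
  refine ⟨hmain, fun h => ne_top_of_le_ne_top ?_ hmain⟩
  exact ENNReal.mul_ne_top ENNReal.ofReal_ne_top h
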